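/- Every ring R with zero multiplication is equationally Noetherian: every system of equations over R (in the ring language with constants from R, in finitely many variables) is equivalent over R to some finite subsystem. -/
import Mathlib


/-- Terms of the ring language {+, -, ·, 0} with constants from `R`. -/
inductive RTerm (R : Type) (n : ℕ) where
  | var : Fin n → RTerm R n
  | const : R → RTerm R n
  | zero : RTerm R n
  | add : RTerm R n → RTerm R n → RTerm R n
  | neg : RTerm R n → RTerm R n
  | mul : RTerm R n → RTerm R n → RTerm R n

def RTerm.eval {R : Type} [NonUnitalRing R] {n : ℕ} (v : Fin n → R) : RTerm R n → R
  | .var i => v i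
  | .const a => a
  | .zero => 0
  | .add t s => t.eval v + s.eval v
  | .neg t => - t.eval v
  | .mul t s => t.eval v * s.eval v

/-- The solution set of a system of ring equations with constants. -/
def SolSet {R : Type} [NonUnitalRing R] {n : ℕ} (S : Set (RTerm R n × RTerm R n)) :
    Set (Fin n → R) :=
  {v | ∀ e ∈ S, e.1.eval v = e.2.eval v}

namespace ZeroMulAux

open Finset

variable {R : Type} [NonUnitalRing R] {n : ℕ}

/-- Integer coefficients of the linearization of a term. -/
def coeff : RTerm R n → (Fin n → ℤ)
  | .var i => fun j => if j = i then 1 else 0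
  | .const _ => 0
  | .zero => 0
  | .add t s => coeff t + coeff s
  | .neg t => - coeff t
  | .mul _ _ => 0

/-- Constant part of the linearization of a term. -/
def cst : RTerm R n → R
  | .var _ => 0
  | .const a => a
  | .zero => 0
  | .add t s => cst t + cst s
  | .neg t => - cst t
  | .mul _ _ => 0

/-- The `ℤ`-linear evaluation map `x ↦ ∑ i, x i • v i`. -/
def phi (v : Fin n → R) : (Fin n → ℤ) →ₗ[ℤ] R where
  toFun x := ∑ i, x i • v i
  map_add' x y := by simp [add_smul, Finset.sum_add_distrib]
  map_smul' z x := by simp [Finset.smul_sum, mul_smul]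

lemma eval_eq (hz : ∀ a b : R, a * b = 0) (t : RTerm R n) (v : Fin n → R) :
    t.eval v = phi v (coeff t) + cst t := by
  induction t with
  | var i => simp [RTerm.eval, coeff, cst, phi, ite_smul]
  | const a => simp [RTerm.eval, coeff, cst, phi]
  | zero => simp [RTerm.eval, coeff, cst, phi]
  | add t s ht hs => simp [RTerm.eval, coeff, cst, ht, hs]; abel
  | neg t ht => simp [RTerm.eval, coeff, cst, ht]; abel
  | mul t s _ _ => simp [RTerm.eval, coeff, cst, phi, hz]

/-- Coefficient vector of an equation. -/
def dL (e : RTerm R n × RTerm R n) : Fin n → ℤ := coeff e.1 - coeff e.2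

/-- Constant of an equation. -/
def dc (e : RTerm R n × RTerm R n) : R := cst e.2 - cst e.1

lemma sat_iff (hz : ∀ a b : R, a * b = 0) (e : RTerm R n × RTerm R n) (v : Fin n → R) :
    e.1.eval v = e.2.eval v ↔ phi v (dL e) = dc e := by
  rw [eval_eq hz e.1 v, eval_eq hz e.2 v, dL, dc, map_sub, sub_eq_sub_iff_add_eq_add]
  constructor <;> intro h <;> exact h.trans (add_comm _ _)

end ZeroMulAux

/-- Every ring with zero multiplication is equationally Noetherian: every system
of equations with constants, in finitely many variables, is equivalent over `R`
to a finite subsystem. -/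
theorem ring_zero_mul_equationally_noetherian {R : Type} [NonUnitalRing R]
    (hz : ∀ a b : R, a * b = 0) (n : ℕ) (S : Set (RTerm R n × RTerm R n)) :
    ∃ S' ⊆ S, S'.Finite ∧ SolSet S' = SolSet S := by
  classical
  open ZeroMulAux in
  -- the span of all coefficient vectors
  set W : Submodule ℤ (Fin n → ℤ) := Submodule.span ℤ (dL '' S) with hW
  obtain ⟨T, hT⟩ := IsNoetherian.noetherian W
  -- each generator lies in the span of a finite subset of the image
  have hfin : ∀ t ∈ T, ∃ U : Finset (Fin n → ℤ), ↑U ⊆ dL '' S ∧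
      (t : Fin n → ℤ) ∈ Submodule.span ℤ (U : Set (Fin n → ℤ)) := by
    intro t ht
    have : (t : Fin n → ℤ) ∈ W := hT ▸ Submodule.subset_span ht
    exact Submodule.mem_span_finite_of_mem_span this
  choose U hU hUmem using hfin
  set Uall : Finset (Fin n → ℤ) := T.attach.biUnion (fun t => U t t.2) with hUall
  have hUallS : (Uall : Set (Fin n → ℤ)) ⊆ dL '' S := by
    intro x hx
    simp only [hUall, Finset.coe_biUnion, Set.mem_iUnion] at hx
    obtain ⟨t, _, hxt⟩ := hx
    exact hU t t.2 hxt
  -- pull the finite generating set back to a finite subset S₀ of S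
  obtain ⟨S₀, hS₀S, hS₀fin, hS₀cov⟩ :
      ∃ S₀ ⊆ S, S₀.Finite ∧ (Uall : Set (Fin n → ℤ)) ⊆ dL '' S₀ := by
    have := (Set.exists_subset_image_finite_and (f := dL) (s := S)
      (p := fun t => (Uall : Set (Fin n → ℤ)) ⊆ t)).mp
      ⟨Uall, hUallS, Uall.finite_toSet, subset_rfl⟩
    obtain ⟨t, hts, htf, htp⟩ := this
    exact ⟨t, hts, htf, htp⟩
  -- the span of the coefficient vectors of S₀ is all of W
  have hspan : W ≤ Submodule.span ℤ (dL '' S₀) := by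
    rw [← hT, Submodule.span_le]
    intro t ht
    refine Submodule.span_le.mpr ?_ (hUmem t ht)
    intro x hx
    exact Submodule.subset_span (hS₀cov (by
      simp only [hUall, Finset.coe_biUnion, Set.mem_iUnion]
      exact ⟨⟨t, ht⟩, Finset.mem_attach _ _, hx⟩))
  -- any two solutions of S₀ give the same value on every dL e, e ∈ S
  have key : ∀ v ∈ SolSet S₀, ∀ w ∈ SolSet S₀, ∀ e ∈ S, phi v (dL e) = phi w (dL e) := by
    intro v hv w hw e he
    have heq : Set.EqOn (phi v) (phi w) (dL '' S₀) := by
      rintro x ⟨e', he', rfl⟩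
      have h1 := (sat_iff hz e' v).mp (hv e' he')
      have h2 := (sat_iff hz e' w).mp (hw e' he')
      rw [h1, h2]
    exact LinearMap.eqOn_span heq (hspan (Submodule.subset_span ⟨e, he, rfl⟩))
  by_cases hsub : SolSet S₀ ⊆ SolSet S
  · refine ⟨S₀, hS₀S, hS₀fin, ?_⟩
    apply Set.Subset.antisymm hsub
    intro v hv e he
    exact hv e (hS₀S he)
  · rw [Set.not_subset] at hsub
    obtain ⟨w, hw, hwS⟩ := hsub
    simp only [SolSet, Set.mem_setOf_eq, not_forall] at hwS
    obtain ⟨e₁, he₁, hwe₁⟩ := hwS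
    refine ⟨insert e₁ S₀, Set.insert_subset he₁ hS₀S, hS₀fin.insert e₁, ?_⟩
    have hempty : SolSet (insert e₁ S₀) = ∅ := by
      rw [Set.eq_empty_iff_forall_notMem]
      intro v hv
      have hv₀ : v ∈ SolSet S₀ := fun e he => hv e (Set.mem_insert_of_mem _ he)
      have h1 : phi v (dL e₁) = dc e₁ :=
        (sat_iff hz e₁ v).mp (hv e₁ (Set.mem_insert _ _))
      have h2 := key v hv₀ w hw e₁ he₁
      exact hwe₁ ((sat_iff hz e₁ w).mpr (h2 ▸ h1))
    rw [hempty, eq_comm, Set.eq_empty_iff_forall_notMem]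
    intro v hv
    have hv₀ : v ∈ SolSet S₀ := fun e he => hv e (hS₀S he)
    have h1 : phi v (dL e₁) = dc e₁ := (sat_iff hz e₁ v).mp (hv e₁ he₁)
    have h2 := key v hv₀ w hw e₁ he₁
    exact hwe₁ ((sat_iff hz e₁ w).mpr (h2 ▸ h1))
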